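/- Let g : [0,∞) → ℝ be bounded measurable with zero Cesàro mean, and let {f_t''} be a fixed integrable function supported in [t−k, t]. Then (1/N²) ∫_{t−k}^{t} g(Nσ) f_t''(σ) dσ = o(1/N²) as N → ∞, i.e. N² times this quantity tends to 0. -/

import Mathlib

open MeasureTheory Filter

namespace RLAux

variable {g : ℝ → ℝ} {M : ℝ}
-- Instead, include them:
lemma intInt (hgm : Measurable g) (hM : ∀ x, |g x| ≤ M) (p q : ℝ) :
    IntervalIntegrable g volume p q := by
  rw [intervalIntegrable_iff]
  refine Measure.integrableOn_of_bounded (M := M) ?_ hgm.aestronglyMeasurable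
    (ae_of_all _ fun x => by simpa [Real.norm_eq_abs] using hM x)
  simp [Set.uIoc, measure_Ioc_lt_top.ne]

lemma hG (hgmean : Tendsto (fun T : ℝ => (1 / T) * ∫ x in (0:ℝ)..T, g x) atTop (nhds 0))
    {u : ℝ} (hu : 0 ≤ u) :
    Tendsto (fun N : ℝ => (1 / N) * ∫ x in (0:ℝ)..(N * u), g x) atTop (nhds 0) := by
  rcases hu.eq_or_lt with h | h
  · have : (fun N : ℝ => (1 / N) * ∫ x in (0:ℝ)..(N * u), g x) = fun _ => 0 := by
      funext N; rw [← h]; simp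
    rw [this]; exact tendsto_const_nhds
  · have h1 : Tendsto (fun N : ℝ => N * u) atTop atTop :=
      Tendsto.atTop_mul_const h tendsto_id
    have h2 := (hgmean.comp h1).const_mul u
    rw [mul_zero] at h2
    apply h2.congr'
    filter_upwards [eventually_gt_atTop 0] with N hN
    show u * ((1 / (N * u)) * ∫ x in (0:ℝ)..(N * u), g x) = _
    rw [← mul_assoc]
    congr 1
    field_simp

lemma interval (hgm : Measurable g) (hM : ∀ x, |g x| ≤ M)
    (hgmean : Tendsto (fun T : ℝ => (1 / T) * ∫ x in (0:ℝ)..T, g x) atTop (nhds 0))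
    {c d : ℝ} (hc : 0 ≤ c) (hd : 0 ≤ d) :
    Tendsto (fun N : ℝ => ∫ σ in c..d, g (N * σ)) atTop (nhds 0) := by
  have h := (hG hgmean hd).sub (hG hgmean hc)
  rw [sub_zero] at h
  apply h.congr'
  filter_upwards [eventually_gt_atTop 0] with N hN
  calc (1 / N) * (∫ x in (0:ℝ)..(N * d), g x) - (1 / N) * ∫ x in (0:ℝ)..(N * c), g x
      = N⁻¹ • ∫ x in (N * c)..(N * d), g x := by
        rw [← intervalIntegral.integral_interval_sub_left (intInt hgm hM 0 (N * d))
          (intInt hgm hM 0 (N * c))]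
        simp [smul_eq_mul, mul_sub, one_div]
    _ = ∫ σ in c..d, g (N * σ) := (intervalIntegral.integral_comp_mul_left g hN.ne').symm

lemma cont_case (hgm : Measurable g) (hM : ∀ x, |g x| ≤ M) (hM0 : 0 ≤ M)
    (hgmean : Tendsto (fun T : ℝ => (1 / T) * ∫ x in (0:ℝ)..T, g x) atTop (nhds 0))
    {a b : ℝ} (ha : 0 ≤ a) (hab : a ≤ b)
    {φ : ℝ → ℝ} (hφ : Continuous φ) (hφu : UniformContinuous φ) :
    Tendsto (fun N : ℝ => ∫ σ in a..b, g (N * σ) * φ σ) atTop (nhds 0) := by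
  have hgN : ∀ N : ℝ, ∀ p q : ℝ, IntervalIntegrable (fun σ => g (N * σ)) volume p q := by
    intro N p q
    exact intInt (g := fun σ => g (N * σ)) (hgm.comp (measurable_const_mul N))
      (fun x => hM _) p q
  have hprod : ∀ N : ℝ, ∀ p q : ℝ,
      IntervalIntegrable (fun σ => g (N * σ) * φ σ) volume p q :=
    fun N p q => (hgN N p q).mul_continuousOn hφ.continuousOn
  rw [Metric.tendsto_nhds]
  intro ε hε
  have hden : 0 < M * (b - a) + 1 := by nlinarith
  set ε' := ε / (2 * (M * (b - a) + 1)) with hε'def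
  have hε' : 0 < ε' := by positivity
  obtain ⟨δ, hδ0, hδ⟩ := Metric.uniformContinuous_iff.1 hφu ε' hε'
  obtain ⟨n, hn⟩ := exists_nat_gt ((b - a) / δ)
  have hn0 : 0 < (n : ℝ) := lt_of_le_of_lt (div_nonneg (by linarith) hδ0.le) hn
  set Δ := (b - a) / n with hΔdef
  have hΔ0 : 0 ≤ Δ := div_nonneg (by linarith) hn0.le
  have hΔδ : Δ < δ := by
    have h' : b - a < n * δ := (div_lt_iff₀ hδ0).1 hn
    rw [hΔdef, div_lt_iff₀ hn0]
    nlinarith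
  set x : ℕ → ℝ := fun i => a + i * Δ with hxdef
  have hx0 : x 0 = a := by simp [hxdef]
  have hxn : x n = b := by
    rw [hxdef]; simp only []; rw [hΔdef]; field_simp; ring
  have hxstep : ∀ i : ℕ, x (i + 1) - x i = Δ := by
    intro i; simp only [hxdef, Nat.cast_add, Nat.cast_one]; ring
  have hxle : ∀ i : ℕ, x i ≤ x (i + 1) := fun i => by
    have := hxstep i; linarith
  have hxnonneg : ∀ i : ℕ, 0 ≤ x i := fun i => by
    have : (0:ℝ) ≤ (i : ℝ) * Δ := mul_nonneg (Nat.cast_nonneg i) hΔ0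
    simp only [hxdef]; linarith
  have hS : Tendsto
      (fun N : ℝ => ∑ i ∈ Finset.range n, φ (x i) * ∫ σ in x i..x (i + 1), g (N * σ))
      atTop (nhds 0) := by
    have := tendsto_finset_sum (Finset.range n)
      (fun i _ => (interval hgm hM hgmean (hxnonneg i) (hxnonneg (i + 1))).const_mul (φ (x i)))
    simpa using this
  have hev := (Metric.tendsto_nhds.1 hS) (ε / 2) (by positivity)
  filter_upwards [hev] with N hN
  rw [Real.dist_eq, sub_zero] at hN ⊢
  have hsplit : (∫ σ in a..b, g (N * σ) * φ σ)
      = ∑ i ∈ Finset.range n, ∫ σ in x i..x (i + 1), g (N * σ) * φ σ := by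
    rw [intervalIntegral.sum_integral_adjacent_intervals (fun i _ => hprod N _ _), hx0, hxn]
  have hterm : ∀ i ∈ Finset.range n,
      |(∫ σ in x i..x (i + 1), g (N * σ) * φ σ)
        - φ (x i) * ∫ σ in x i..x (i + 1), g (N * σ)| ≤ M * ε' * Δ := by
    intro i _
    have h1 : φ (x i) * (∫ σ in x i..x (i + 1), g (N * σ))
        = ∫ σ in x i..x (i + 1), φ (x i) * g (N * σ) :=
      (intervalIntegral.integral_const_mul _ _).symm
    rw [h1, ← intervalIntegral.integral_sub (hprod N _ _) ((hgN N _ _).const_mul _)]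
    have hb := intervalIntegral.norm_integral_le_of_norm_le_const (C := M * ε')
      (f := fun σ => g (N * σ) * φ σ - φ (x i) * g (N * σ)) (a := x i) (b := x (i + 1)) ?_
    · rw [Real.norm_eq_abs] at hb
      calc |∫ σ in x i..x (i + 1), (g (N * σ) * φ σ - φ (x i) * g (N * σ))|
          ≤ M * ε' * |x (i + 1) - x i| := hb
        _ = M * ε' * Δ := by rw [hxstep i, abs_of_nonneg hΔ0]
    · intro σ hσ
      rw [Set.uIoc_of_le (hxle i)] at hσ
      show ‖g (N * σ) * φ σ - φ (x i) * g (N * σ)‖ ≤ M * ε'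
      have hd1 : dist σ (x i) < δ := by
        rw [Real.dist_eq, abs_of_pos (by linarith [hσ.1])]
        have := hσ.2
        have := hxstep i
        linarith
      have h2 := hδ hd1
      rw [Real.dist_eq] at h2
      have heq : g (N * σ) * φ σ - φ (x i) * g (N * σ) = g (N * σ) * (φ σ - φ (x i)) := by ring
      rw [heq, Real.norm_eq_abs, abs_mul]
      exact mul_le_mul (hM _) h2.le (abs_nonneg _) hM0
  have hdiff : |(∫ σ in a..b, g (N * σ) * φ σ)
      - ∑ i ∈ Finset.range n, φ (x i) * ∫ σ in x i..x (i + 1), g (N * σ)| ≤ M * ε' * (b - a) := by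
    rw [hsplit, ← Finset.sum_sub_distrib]
    calc |∑ i ∈ Finset.range n, ((∫ σ in x i..x (i + 1), g (N * σ) * φ σ)
            - φ (x i) * ∫ σ in x i..x (i + 1), g (N * σ))|
        ≤ ∑ i ∈ Finset.range n, |(∫ σ in x i..x (i + 1), g (N * σ) * φ σ)
            - φ (x i) * ∫ σ in x i..x (i + 1), g (N * σ)| := Finset.abs_sum_le_sum_abs _ _
      _ ≤ ∑ _i ∈ Finset.range n, M * ε' * Δ := Finset.sum_le_sum hterm
      _ = n * (M * ε' * Δ) := by rw [Finset.sum_const, Finset.card_range, nsmul_eq_mul]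
      _ = M * ε' * (b - a) := by rw [hΔdef]; field_simp
  have hMε' : M * ε' * (b - a) < ε / 2 := by
    have heq : M * ε' * (b - a) = ε * (M * (b - a)) / (2 * (M * (b - a) + 1)) := by
      rw [hε'def]; ring
    rw [heq, div_lt_iff₀ (by positivity)]
    nlinarith [mul_nonneg hM0 (by linarith : (0:ℝ) ≤ b - a)]
  calc |∫ σ in a..b, g (N * σ) * φ σ|
      = |((∫ σ in a..b, g (N * σ) * φ σ)
          - ∑ i ∈ Finset.range n, φ (x i) * ∫ σ in x i..x (i + 1), g (N * σ))
          + ∑ i ∈ Finset.range n, φ (x i) * ∫ σ in x i..x (i + 1), g (N * σ)| := by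
        rw [sub_add_cancel]
    _ ≤ _ + _ := abs_add_le _ _
    _ < ε / 2 + ε / 2 := add_lt_add_of_le_of_lt (hdiff.trans_lt hMε').le hN
    _ = ε := by ring
lemma main_case (hgm : Measurable g) (hM : ∀ x, |g x| ≤ M) (hM0 : 0 ≤ M)
    (hgmean : Tendsto (fun T : ℝ => (1 / T) * ∫ x in (0:ℝ)..T, g x) atTop (nhds 0))
    {a b : ℝ} (ha : 0 ≤ a) (hab : a ≤ b)
    {f : ℝ → ℝ} (hf : Integrable f volume) :
    Tendsto (fun N : ℝ => ∫ σ in a..b, g (N * σ) * f σ) atTop (nhds 0) := by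
  rw [Metric.tendsto_nhds]
  intro ε hε
  set ε' := ε / (2 * (M + 1)) with hε'def
  have hε' : 0 < ε' := by positivity
  obtain ⟨φ, hφsupp, hφL1, hφcont, hφint⟩ := hf.exists_hasCompactSupport_integral_sub_le hε'
  have hφu : UniformContinuous φ := hφsupp.uniformContinuous_of_continuous hφcont
  have hev := (Metric.tendsto_nhds.1 (cont_case hgm hM hM0 hgmean ha hab hφcont hφu))
    (ε / 2) (by positivity)
  filter_upwards [hev] with N hN
  rw [Real.dist_eq, sub_zero] at hN ⊢
  -- measurability / boundedness of g (N * ·)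
  have hgNm : AEStronglyMeasurable (fun σ => g (N * σ)) volume :=
    (hgm.comp (measurable_const_mul N)).aestronglyMeasurable
  have hgNb : ∀ᵐ x : ℝ, ‖g (N * x)‖ ≤ M :=
    ae_of_all _ fun x => by simpa [Real.norm_eq_abs] using hM (N * x)
  have hsub : Integrable (fun σ => f σ - φ σ) volume := hf.sub hφint
  have hint1 : Integrable (fun σ => g (N * σ) * f σ) volume := hf.bdd_mul hgNm hgNb
  have hint2 : Integrable (fun σ => g (N * σ) * φ σ) volume := hφint.bdd_mul hgNm hgNb
  have hint3 : Integrable (fun σ => g (N * σ) * (f σ - φ σ)) volume := hsub.bdd_mul hgNm hgNb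
  have key : |(∫ σ in a..b, g (N * σ) * f σ) - ∫ σ in a..b, g (N * σ) * φ σ| ≤ M * ε' := by
    have h1 : (∫ σ in a..b, g (N * σ) * f σ) - ∫ σ in a..b, g (N * σ) * φ σ
        = ∫ σ in a..b, g (N * σ) * (f σ - φ σ) := by
      rw [← intervalIntegral.integral_sub hint1.intervalIntegrable hint2.intervalIntegrable]
      congr 1; funext σ; ring
    rw [h1]
    calc |∫ σ in a..b, g (N * σ) * (f σ - φ σ)|
        ≤ ∫ σ in a..b, |g (N * σ) * (f σ - φ σ)| :=
          intervalIntegral.abs_integral_le_integral_abs hab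
      _ ≤ ∫ σ in a..b, M * |f σ - φ σ| := by
          apply intervalIntegral.integral_mono_on hab hint3.abs.intervalIntegrable
            (hsub.abs.const_mul M).intervalIntegrable
          intro σ _
          rw [abs_mul]
          exact mul_le_mul_of_nonneg_right (hM _) (abs_nonneg _)
      _ = M * ∫ σ in a..b, |f σ - φ σ| := intervalIntegral.integral_const_mul _ _
      _ ≤ M * ∫ σ, |f σ - φ σ| := by
          apply mul_le_mul_of_nonneg_left _ hM0
          rw [intervalIntegral.integral_of_le hab]
          exact setIntegral_le_integral hsub.abs (ae_of_all _ fun σ => abs_nonneg _)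
      _ ≤ M * ε' := by
          apply mul_le_mul_of_nonneg_left _ hM0
          simpa [Real.norm_eq_abs] using hφL1
  have hMε' : M * ε' ≤ ε / 2 := by
    rw [hε'def, show M * (ε / (2 * (M + 1))) = M * ε / (2 * (M + 1)) by ring,
      div_le_div_iff₀ (by positivity) two_pos]
    nlinarith [mul_nonneg hε.le hM0]
  calc |∫ σ in a..b, g (N * σ) * f σ|
      = |((∫ σ in a..b, g (N * σ) * f σ) - ∫ σ in a..b, g (N * σ) * φ σ)
        + ∫ σ in a..b, g (N * σ) * φ σ| := by rw [sub_add_cancel]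
    _ ≤ _ + _ := abs_add_le _ _
    _ < ε / 2 + ε / 2 := add_lt_add_of_le_of_lt (key.trans hMε') hN
    _ = ε := by ring
end RLAux

/-- Riemann–Lebesgue applied to the second-derivative term: for zero-Cesàro-mean
bounded `g` and integrable `f''` supported in `[t−k, t]`,
`(1/N²) ∫ g(Nσ) f''(σ) dσ = o(1/N²)`. -/
theorem rl_second_derivative_term
    (g : ℝ → ℝ)
    (hgm : Measurable g) (hgb : ∃ M : ℝ, ∀ x : ℝ, 0 ≤ x → |g x| ≤ M)
    (hgmean : Tendsto (fun T : ℝ => (1 / T) * ∫ x in (0:ℝ)..T, g x) atTop (nhds 0))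
    (t k : ℝ) (hk : 0 < k) (htk : k ≤ t)
    (f'' : ℝ → ℝ) (hf'' : IntegrableOn f'' (Set.Icc (t - k) t))
    (hsupp : Function.support f'' ⊆ Set.Icc (t - k) t) :
    Tendsto
      (fun N : ℝ => N ^ 2 * ((1 / N ^ 2) * ∫ σ in (t - k)..t, g (N * σ) * f'' σ))
      atTop (nhds 0) := by
  obtain ⟨M, hMb⟩ := hgb
  have hM0 : 0 ≤ M := le_trans (abs_nonneg _) (hMb 0 le_rfl)
  set g' : ℝ → ℝ := fun x => if 0 ≤ x then g x else 0 with hg'def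
  have hg'm : Measurable g' := Measurable.ite measurableSet_Ici hgm measurable_const
  have hM' : ∀ x, |g' x| ≤ M := by
    intro x
    by_cases h : 0 ≤ x
    · simp only [hg'def, if_pos h]; exact hMb x h
    · simp only [hg'def, if_neg h, abs_zero]; exact hM0
  have hmean' : Tendsto (fun T : ℝ => (1 / T) * ∫ x in (0:ℝ)..T, g' x) atTop (nhds 0) := by
    apply hgmean.congr'
    filter_upwards [eventually_ge_atTop (0:ℝ)] with T hT
    congr 1
    apply intervalIntegral.integral_congr
    intro x hx
    rw [Set.uIcc_of_le hT] at hx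
    simp only [hg'def, if_pos hx.1]
  have hfint : Integrable f'' volume := by
    have h := hf''.integrable_indicator measurableSet_Icc
    rwa [Set.indicator_eq_self.2 hsupp] at h
  have ha : (0:ℝ) ≤ t - k := by linarith
  have hab : t - k ≤ t := by linarith
  have hmain := RLAux.main_case hg'm hM' hM0 hmean' ha hab hfint
  apply hmain.congr'
  filter_upwards [eventually_ge_atTop (1:ℝ)] with N hN
  have hN0 : (0:ℝ) < N := by linarith
  have h1 : (∫ σ in (t - k)..t, g' (N * σ) * f'' σ)
      = ∫ σ in (t - k)..t, g (N * σ) * f'' σ := by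
    apply intervalIntegral.integral_congr
    intro σ hσ
    rw [Set.uIcc_of_le hab] at hσ
    have hσ0 : 0 ≤ N * σ := mul_nonneg hN0.le (ha.trans hσ.1)
    simp only [hg'def, if_pos hσ0]
  rw [h1, ← mul_assoc, mul_one_div, div_self (by positivity : (N:ℝ) ^ 2 ≠ 0), one_mul]
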